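/- For any finite connected graph G on n vertices and any two vertices u, v of G, if ρ = (x_0, x_1, …, x_ℓ) is a shortest path between u = x_0 and v = x_ℓ, then the sum of the degrees of the vertices along the path satisfies Σ_{i=0}^{ℓ} d(x_i) ≤ 3n. -/

import Mathlib

open Finset Filter Classical
open scoped ENNReal

noncomputable section

variable {V : Type*} [Fintype V] [DecidableEq V]

/-- Degree of a vertex in a simple graph. -/
def gdeg (G : SimpleGraph V) (u : V) : ℕ :=
  (Finset.univ.filter (fun v => G.Adj u v)).card

/-- Transition probabilities of the simple random walk on `G`. -/
def srw (G : SimpleGraph V) (u v : V) : ℝ :=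
  if G.Adj u v then ((gdeg G u : ℝ))⁻¹ else 0

/-- Probability weight of a trajectory under the transition kernel `P`. -/
def stepWeight (P : V → V → ℝ) {t : ℕ} (f : Fin (t + 1) → V) : ℝ :=
  ∏ i : Fin t, P (f i.castSucc) (f i.succ)

/-- Probability that the `t`-step trajectory of the chain `P` started at `u`
satisfies the predicate `A`. -/
def eventProb (P : V → V → ℝ) (u : V) (t : ℕ) (A : (Fin (t + 1) → V) → Prop) : ℝ :=
  ∑ f : Fin (t + 1) → V, if f 0 = u ∧ A f then stepWeight P f else 0

/-- Expected hitting time `H[u,v]`, via `E[T] = ∑_t Pr(T > t)`. -/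
def hitTime (P : V → V → ℝ) (u v : V) : ℝ≥0∞ :=
  ∑' t : ℕ, ENNReal.ofReal (eventProb P u t (fun f => ∀ i, f i ≠ v))

/-- Expected cover time starting from `u`. -/
def coverTimeFrom (P : V → V → ℝ) (u : V) : ℝ≥0∞ :=
  ∑' t : ℕ, ENNReal.ofReal (eventProb P u t (fun f => ∃ v, ∀ i, f i ≠ v))

/-- The cover time `COV`: maximum over starting vertices of the expected cover time. -/
def coverTime (P : V → V → ℝ) : ℝ≥0∞ := ⨆ u, coverTimeFrom P u

/-- Stationary probability of `v` for the simple random walk: `d(v)/(2|E|)`. -/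
def statPi (G : SimpleGraph V) (v : V) : ℝ := (gdeg G v : ℝ) / (∑ u, (gdeg G u : ℝ))

/-- Number of visits to `w` in a trajectory. -/
def visits {t : ℕ} (f : Fin (t + 1) → V) (w : V) : ℕ :=
  (Finset.univ.filter (fun i => f i = w)).card

/-- The blanket-cover time `BCOV[G]`. -/
def blanketCoverTime (G : SimpleGraph V) : ℝ≥0∞ :=
  ⨆ u, ∑' t : ℕ, ENNReal.ofReal (eventProb (srw G) u t
    (fun f => ∃ w, (visits f w : ℝ≥0∞) < ENNReal.ofReal (statPi G w) * coverTime (srw G)))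

/-- Minimum degree. -/
def minDeg (G : SimpleGraph V) : ℕ := sInf (Set.range (gdeg G))

/-- Maximum degree. -/
def maxDeg (G : SimpleGraph V) : ℕ := Finset.univ.sup (gdeg G)

/-- Number of edges (by the handshaking lemma). -/
def edgeCount (G : SimpleGraph V) : ℕ := (∑ v, gdeg G v) / 2

/-- Diameter. -/
def gdiam (G : SimpleGraph V) : ℕ := Finset.univ.sup (fun p : V × V => G.dist p.1 p.2)

/-- Effective resistance between `u` and `v`, all edges having unit resistance:
the reciprocal of the effective conductance, the latter given by the Dirichlet
variational principle. -/
def effRes (G : SimpleGraph V) (u v : V) : ℝ :=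
  (sInf {e : ℝ | ∃ f : V → ℝ, f u = 1 ∧ f v = 0 ∧
      e = (∑ x, ∑ y, if G.Adj x y then (f x - f y) ^ 2 else 0) / 2})⁻¹

/-- Maximum effective resistance over pairs of vertices. -/
def Rmax (G : SimpleGraph V) : ℝ := sSup {r : ℝ | ∃ u v, r = effRes G u v}


/-- Transition probability of the weighted random walk on the weighted graph `(G, w)`:
`P_{u,v} = w(u,v)/w(u)`. -/
def wP (G : SimpleGraph V) (w : V → V → ℝ) (u v : V) : ℝ :=
  (if G.Adj u v then w u v else 0) / (∑ x, if G.Adj u x then w u x else 0)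

/-- The minimum-degree weighting scheme: each edge `(u,v)` gets weight
`1/min{d(u),d(v)}`. -/
def mindegWeight (G : SimpleGraph V) (u v : V) : ℝ :=
  ((min (gdeg G u) (gdeg G v) : ℕ) : ℝ)⁻¹

/-- Transition probabilities of the minimum-degree weighted random walk. -/
def mindegP (G : SimpleGraph V) : V → V → ℝ := wP G (mindegWeight G)

end

private lemma dist_getVert_le' {V : Type*} (G : SimpleGraph V) (hG : G.Connected)
    {u v : V} (p : G.Walk u v) (i : ℕ) : G.dist u (p.getVert i) ≤ i := by
  induction i with
  | zero => simp
  | succ i ih =>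
    by_cases h : i < p.length
    · calc G.dist u (p.getVert (i+1))
          ≤ G.dist u (p.getVert i) + G.dist (p.getVert i) (p.getVert (i+1)) :=
            hG.dist_triangle
        _ ≤ i + 1 := by
            have : G.dist (p.getVert i) (p.getVert (i+1)) ≤ 1 :=
              SimpleGraph.dist_le (SimpleGraph.Walk.cons (p.adj_getVert_succ h) SimpleGraph.Walk.nil)
            omega
    · have h1 : p.getVert (i+1) = v := p.getVert_of_length_le (by omega)
      have h2 : p.getVert i = v := p.getVert_of_length_le (by omega)
      rw [h1, ← h2]; omega

open scoped Classical in

/-- For any finite connected graph `G` on `n` vertices and any shortest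
path `ρ = (x_0,…,x_ℓ)` between two vertices `u` and `v`, the sum of the degrees of the
vertices along the path is at most `3n`. -/
theorem shortest_path_degree_sum_le
    {V : Type*} [Fintype V] [DecidableEq V] (G : SimpleGraph V) (hG : G.Connected)
    (u v : V) (p : G.Walk u v) (hp : p.IsPath) (hshort : p.length = G.dist u v) :
    (p.support.map (gdeg G)).sum ≤ 3 * Fintype.card V := by
  classical
  -- each support vertex is at its exact distance from u
  have key : ∀ x ∈ p.support, ∃ i, p.getVert i = x ∧ G.dist u x = i := by
    intro x hx
    obtain ⟨i, hgv, hi⟩ := SimpleGraph.Walk.mem_support_iff_exists_getVert.mp hx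
    refine ⟨i, hgv, ?_⟩
    have h1 : G.dist u x ≤ i := hgv ▸ dist_getVert_le' G hG p i
    have h2 : G.dist x v ≤ p.length - i := by
      have hr := dist_getVert_le' G hG p.reverse (p.length - i)
      rw [SimpleGraph.Walk.getVert_reverse] at hr
      have : p.length - (p.length - i) = i := by omega
      rw [this, hgv] at hr
      calc G.dist x v = G.dist v x := SimpleGraph.dist_comm ..
        _ ≤ p.length - i := hr
    have h3 : p.length ≤ G.dist u x + G.dist x v := hshort ▸ hG.dist_triangle
    omega
  have inj : ∀ x ∈ p.support, ∀ x' ∈ p.support, G.dist u x = G.dist u x' → x = x' := by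
    intro x hx x' hx' hd
    obtain ⟨i, hgi, hdi⟩ := key x hx
    obtain ⟨j, hgj, hdj⟩ := key x' hx'
    have : i = j := by omega
    rw [← hgi, ← hgj, this]
  -- each vertex y is adjacent to at most 3 support vertices
  have adj3 : ∀ y : V, (p.support.toFinset.filter (fun x => G.Adj x y)).card ≤ 3 := by
    intro y
    set T := p.support.toFinset.filter (fun x => G.Adj x y) with hT
    rcases T.eq_empty_or_nonempty with h | h
    · simp [h]
    obtain ⟨x₀, hx₀T, hmin⟩ := T.exists_min_image (fun x => G.dist u x) h
    have hx₀s : x₀ ∈ p.support := List.mem_toFinset.mp (Finset.mem_filter.mp hx₀T).1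
    have hx₀y : G.Adj x₀ y := (Finset.mem_filter.mp hx₀T).2
    have hcard : T.card ≤ (Finset.Icc (G.dist u x₀) (G.dist u x₀ + 2)).card := by
      apply Finset.card_le_card_of_injOn (fun x => G.dist u x)
      · intro x hxT
        have hxs : x ∈ p.support := List.mem_toFinset.mp (Finset.mem_filter.mp hxT).1
        have hxy : G.Adj x y := (Finset.mem_filter.mp hxT).2
        have hle : G.dist x₀ x ≤ 2 :=
          SimpleGraph.dist_le (SimpleGraph.Walk.cons hx₀y
            (SimpleGraph.Walk.cons hxy.symm SimpleGraph.Walk.nil))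
        have htri : G.dist u x ≤ G.dist u x₀ + G.dist x₀ x := hG.dist_triangle
        have hm := hmin x hxT
        simp only [Finset.coe_Icc, Set.mem_Icc, Finset.mem_coe, Finset.mem_Icc]
        omega
      · intro x hx x' hx' hd
        exact inj x (List.mem_toFinset.mp (Finset.mem_filter.mp (Finset.mem_coe.mp hx)).1)
          x' (List.mem_toFinset.mp (Finset.mem_filter.mp (Finset.mem_coe.mp hx')).1) hd
    rw [Nat.card_Icc] at hcard; omega
  -- sum over the support (nodup) and double count
  have hnodup : p.support.Nodup := hp.support_nodup
  have hsum : (p.support.map (gdeg G)).sum = ∑ x ∈ p.support.toFinset, gdeg G x := by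
    rw [Finset.sum_list_map_count]
    refine Finset.sum_congr rfl fun x hx => ?_
    rw [List.count_eq_one_of_mem hnodup (List.mem_toFinset.mp hx), one_smul]
  rw [hsum]
  have hswap : ∑ x ∈ p.support.toFinset, gdeg G x
      = ∑ y : V, (p.support.toFinset.filter (fun x => G.Adj x y)).card := by
    simp only [gdeg, Finset.card_filter]
    rw [Finset.sum_comm]
  rw [hswap]
  calc ∑ y : V, (p.support.toFinset.filter (fun x => G.Adj x y)).card
      ≤ ∑ _y : V, 3 := Finset.sum_le_sum fun y _ => adj3 y
    _ = 3 * Fintype.card V := by simp [Finset.sum_const, mul_comm]
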